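/- arXiv:1904.09332 — 2 statements merged into one kernel-verified Lean document; each statement's English description precedes it below -/
import Mathlib

section
/- Let S and M be symmetric positive definite real N×N matrices, f ∈ ℝ^N and y ≥ 0. Let w be the solution of (S + e^{-y} M) w = f, let w̃ ∈ ℝ^N be arbitrary, and set r := f - (S + e^{-y} M) w̃. Then ‖w - w̃‖_M ≤ ‖r‖₂ / ( √(λ_min(M)) · ( e^{-y} + λ_min(S, M) ) ), where ‖r‖₂ is the Euclidean norm of r, λ_min(M) is the smallest eigenvalue of M, and λ_min(S, M) := inf over nonzero x of (xᵀ S x)/(xᵀ M x). -/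
open Matrix

/-- The smallest generalized eigenvalue of the pair `(S, M)`:
`λ_min(S, M) = inf_{x ≠ 0} (xᵀ S x)/(xᵀ M x)`. -/
noncomputable def lamMinGen {N : ℕ} (S M : Matrix (Fin N) (Fin N) ℝ) : ℝ :=
  sInf ((fun x : Fin N → ℝ => (x ⬝ᵥ S.mulVec x) / (x ⬝ᵥ M.mulVec x)) '' {x | x ≠ 0})

/-- The `M`-norm `‖x‖_M = √(xᵀ M x)`. -/
noncomputable def normWeighted {N : ℕ} (M : Matrix (Fin N) (Fin N) ℝ) (x : Fin N → ℝ) : ℝ :=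
  Real.sqrt (x ⬝ᵥ M.mulVec x)

/-- The Euclidean norm `‖x‖₂ = √(xᵀ x)`. -/
noncomputable def normEuclid {N : ℕ} (x : Fin N → ℝ) : ℝ :=
  Real.sqrt (x ⬝ᵥ x)

/-- Cauchy–Schwarz for the real dot product. -/
lemma cs_dot {N : ℕ} (a b : Fin N → ℝ) : a ⬝ᵥ b ≤ Real.sqrt (a ⬝ᵥ a) * Real.sqrt (b ⬝ᵥ b) := by
  have h := real_inner_le_norm ((WithLp.equiv 2 (Fin N → ℝ)).symm a) ((WithLp.equiv 2 (Fin N → ℝ)).symm b)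
  have h1 : (inner ℝ ((WithLp.equiv 2 (Fin N → ℝ)).symm a) ((WithLp.equiv 2 (Fin N → ℝ)).symm b) : ℝ) = a ⬝ᵥ b := by
    simp [PiLp.inner_apply, dotProduct, mul_comm]
  have h2 : ∀ c : Fin N → ℝ, ‖(WithLp.equiv 2 (Fin N → ℝ)).symm c‖ = Real.sqrt (c ⬝ᵥ c) := by
    intro c
    rw [EuclideanSpace.norm_eq]
    congr 1
    simp [dotProduct, Real.norm_eq_abs, sq_abs, pow_two]
  rw [h1, h2, h2] at h
  exact h

lemma dot_norm_eq {N : ℕ} (c : Fin N → ℝ) :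
    ‖(WithLp.equiv 2 (Fin N → ℝ)).symm c‖ = Real.sqrt (c ⬝ᵥ c) := by
  rw [EuclideanSpace.norm_eq]
  congr 1
  simp [dotProduct, Real.norm_eq_abs, sq_abs, pow_two]

lemma quad_cont {N : ℕ} (M : Matrix (Fin N) (Fin N) ℝ) :
    Continuous (fun u : EuclideanSpace ℝ (Fin N) =>
      (WithLp.equiv 2 (Fin N → ℝ)) u ⬝ᵥ M.mulVec ((WithLp.equiv 2 (Fin N → ℝ)) u)) := by
  have hc : Continuous (WithLp.equiv 2 (Fin N → ℝ)) :=
    (PiLp.continuousLinearEquiv 2 ℝ (fun _ : Fin N => ℝ)).continuous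
  have hψ : Continuous (fun x : Fin N → ℝ => x ⬝ᵥ M.mulVec x) := by
    simp only [dotProduct, Matrix.mulVec]
    fun_prop
  exact hψ.comp hc

lemma quad_lb {N : ℕ} (M : Matrix (Fin N) (Fin N) ℝ) (hM : M.PosDef) (hN : 0 < N) :
    ∃ c > 0, ∀ x : Fin N → ℝ, c * (x ⬝ᵥ x) ≤ x ⬝ᵥ M.mulVec x := by
  haveI : Nonempty (Fin N) := ⟨⟨0, hN⟩⟩
  set φ : EuclideanSpace ℝ (Fin N) → ℝ := fun u =>
    (WithLp.equiv 2 (Fin N → ℝ)) u ⬝ᵥ M.mulVec ((WithLp.equiv 2 (Fin N → ℝ)) u) with hφ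
  have hne : (Metric.sphere (0 : EuclideanSpace ℝ (Fin N)) 1).Nonempty :=
    NormedSpace.sphere_nonempty.mpr zero_le_one
  obtain ⟨u, hu, hmin⟩ := (isCompact_sphere (0 : EuclideanSpace ℝ (Fin N)) 1).exists_isMinOn
    hne (quad_cont M).continuousOn
  have hunorm : ‖u‖ = 1 := mem_sphere_zero_iff_norm.mp hu
  have hune : (WithLp.equiv 2 (Fin N → ℝ)) u ≠ 0 := by
    intro h
    have : u = 0 := by
      apply (WithLp.equiv 2 (Fin N → ℝ)).injective
      simpa using h
    rw [this] at hunorm; simp at hunorm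
  have hc : 0 < φ u := by simpa [hφ] using hM.dotProduct_mulVec_pos hune
  refine ⟨φ u, hc, fun x => ?_⟩
  rcases eq_or_ne x 0 with rfl | hx
  · simp
  · have hxx : 0 < x ⬝ᵥ x := by
      simpa using Matrix.dotProduct_self_star_pos_iff (v := x) |>.mpr hx
    set t := Real.sqrt (x ⬝ᵥ x) with ht
    have htpos : 0 < t := Real.sqrt_pos.mpr hxx
    have ht2 : t * t = x ⬝ᵥ x := Real.mul_self_sqrt hxx.le
    set v : EuclideanSpace ℝ (Fin N) := (WithLp.equiv 2 (Fin N → ℝ)).symm (t⁻¹ • x) with hv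
    have hvs : v ∈ Metric.sphere (0 : EuclideanSpace ℝ (Fin N)) 1 := by
      rw [mem_sphere_zero_iff_norm, hv, dot_norm_eq]
      rw [smul_dotProduct, dotProduct_smul, smul_eq_mul, smul_eq_mul, ← mul_assoc]
      rw [show t⁻¹ * t⁻¹ * (x ⬝ᵥ x) = t⁻¹ * t⁻¹ * (t * t) from by rw [ht2]]
      have : t⁻¹ * t⁻¹ * (t * t) = 1 := by field_simp
      rw [this, Real.sqrt_one]
    have hmv : φ u ≤ φ v := hmin hvs
    have hφv : φ v = t⁻¹ * t⁻¹ * (x ⬝ᵥ M.mulVec x) := by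
      simp only [hφ, hv, Equiv.apply_symm_apply]
      rw [Matrix.mulVec_smul, smul_dotProduct, dotProduct_smul, smul_eq_mul, smul_eq_mul]
      ring
    rw [hφv] at hmv
    have := mul_le_mul_of_nonneg_right hmv hxx.le
    calc φ u * (x ⬝ᵥ x) ≤ t⁻¹ * t⁻¹ * (x ⬝ᵥ M.mulVec x) * (x ⬝ᵥ x) := this
      _ = x ⬝ᵥ M.mulVec x := by
          rw [show (x ⬝ᵥ x) = t * t from ht2.symm]; field_simp

lemma dot_self_pos {N : ℕ} {x : Fin N → ℝ} (hx : x ≠ 0) : 0 < x ⬝ᵥ x := by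
  simpa using Matrix.dotProduct_self_star_pos_iff (v := x) |>.mpr hx

lemma posdef_dot_pos {N : ℕ} {M : Matrix (Fin N) (Fin N) ℝ} (hM : M.PosDef)
    {x : Fin N → ℝ} (hx : x ≠ 0) : 0 < x ⬝ᵥ M.mulVec x := by
  simpa using hM.dotProduct_mulVec_pos hx

lemma lamMinGen_bddBelow {N : ℕ} (S M : Matrix (Fin N) (Fin N) ℝ)
    (hS : S.PosDef) (hM : M.PosDef) :
    BddBelow ((fun x : Fin N → ℝ => (x ⬝ᵥ S.mulVec x) / (x ⬝ᵥ M.mulVec x)) '' {x | x ≠ 0}) := by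
  refine ⟨0, fun z hz => ?_⟩
  obtain ⟨x, hx, rfl⟩ := hz
  exact div_nonneg (posdef_dot_pos hS hx).le (posdef_dot_pos hM hx).le

lemma lamMinGen_nonneg {N : ℕ} (S M : Matrix (Fin N) (Fin N) ℝ)
    (hS : S.PosDef) (hM : M.PosDef) : 0 ≤ lamMinGen S M := by
  apply Real.sInf_nonneg
  rintro z ⟨x, hx, rfl⟩
  exact div_nonneg (posdef_dot_pos hS hx).le (posdef_dot_pos hM hx).le

lemma lamMinGen_le {N : ℕ} (S M : Matrix (Fin N) (Fin N) ℝ)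
    (hS : S.PosDef) (hM : M.PosDef) {x : Fin N → ℝ} (hx : x ≠ 0) :
    lamMinGen S M ≤ (x ⬝ᵥ S.mulVec x) / (x ⬝ᵥ M.mulVec x) :=
  csInf_le (lamMinGen_bddBelow S M hS hM) ⟨x, hx, rfl⟩

lemma lamMinGen_one_pos {N : ℕ} (M : Matrix (Fin N) (Fin N) ℝ) (hM : M.PosDef) (hN : 0 < N) :
    0 < lamMinGen M 1 := by
  obtain ⟨c, hc, hcb⟩ := quad_lb M hM hN
  have hx0 : (fun _ : Fin N => (1:ℝ)) ≠ 0 := by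
    intro h
    have := congr_fun h ⟨0, hN⟩
    simp at this
  apply lt_of_lt_of_le hc
  rw [lamMinGen]
  apply le_csInf ⟨_, Set.mem_image_of_mem _ (show (fun _ : Fin N => (1:ℝ)) ∈ {x | x ≠ 0} from hx0)⟩
  rintro z ⟨x, hx, rfl⟩
  show c ≤ x ⬝ᵥ M.mulVec x / (x ⬝ᵥ (1 : Matrix (Fin N) (Fin N) ℝ).mulVec x)
  rw [Matrix.one_mulVec, le_div_iff₀ (dot_self_pos hx)]
  exact hcb x
/-- A posteriori error indicator `Δ_{n,-}(y)` (residual bound for the `-` problem):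
if `(S + e^{-y} M) w = f` and `r = f - (S + e^{-y} M) w̃`, then
`‖w - w̃‖_M ≤ ‖r‖₂ / (√(λ_min(M)) (e^{-y} + λ_min(S,M)))`, where `λ_min(M)` is the
smallest eigenvalue of `M`, i.e. `λ_min(M, I)`. -/
theorem rbm_error_indicator_minus {N : ℕ} (S M : Matrix (Fin N) (Fin N) ℝ)
    (hS : S.PosDef) (hM : M.PosDef) (f : Fin N → ℝ) (y : ℝ) (hy : 0 ≤ y)
    (w wt : Fin N → ℝ) (hw : (S + Real.exp (-y) • M).mulVec w = f) :
    normWeighted M (w - wt) ≤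
      normEuclid (f - (S + Real.exp (-y) • M).mulVec wt) /
        (Real.sqrt (lamMinGen M 1) * (Real.exp (-y) + lamMinGen S M)) := by
  set c := Real.exp (-y) with hcdef
  set A := S + c • M with hA
  set e := w - wt with he
  have hcpos : 0 < c := Real.exp_pos _
  have hL : 0 ≤ lamMinGen S M := lamMinGen_nonneg S M hS hM
  rcases eq_or_ne e 0 with he0 | hne
  · have hwt : w = wt := sub_eq_zero.mp he0
    rw [he0]
    have : normWeighted M 0 = 0 := by simp [normWeighted]
    rw [this]
    apply div_nonneg (Real.sqrt_nonneg _)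
    exact mul_nonneg (Real.sqrt_nonneg _) (add_nonneg hcpos.le hL)
  · have hN : 0 < N := by
      rcases Function.ne_iff.mp hne with ⟨i, _⟩
      exact i.pos
    set r := f - A.mulVec wt with hr
    have hAe : A.mulVec e = r := by
      rw [he, Matrix.mulVec_sub, hw, hr]
    set q := e ⬝ᵥ M.mulVec e with hq
    set p := e ⬝ᵥ e with hp
    set R := r ⬝ᵥ r with hR
    set L := lamMinGen S M with hLdef
    set L1 := lamMinGen M 1 with hL1def
    have hqpos : 0 < q := posdef_dot_pos hM hne
    have hppos : 0 < p := dot_self_pos hne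
    have hL1pos : 0 < L1 := lamMinGen_one_pos M hM hN
    -- L * q ≤ e S e
    have h1 : L * q ≤ e ⬝ᵥ S.mulVec e := by
      have := lamMinGen_le S M hS hM hne
      rw [← hq] at this
      calc L * q ≤ ((e ⬝ᵥ S.mulVec e) / q) * q := by
            exact mul_le_mul_of_nonneg_right this hqpos.le
        _ = e ⬝ᵥ S.mulVec e := by field_simp
    -- L1 * p ≤ q
    have h2 : L1 * p ≤ q := by
      have := lamMinGen_le M 1 hM (Matrix.PosDef.one) hne
      rw [Matrix.one_mulVec, ← hq, ← hp] at this
      calc L1 * p ≤ (q / p) * p := mul_le_mul_of_nonneg_right this hppos.le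
        _ = q := by field_simp
    -- quadratic identity
    have h3 : e ⬝ᵥ A.mulVec e = e ⬝ᵥ S.mulVec e + c * q := by
      rw [hA, Matrix.add_mulVec, Matrix.smul_mulVec, dotProduct_add, dotProduct_smul]
      simp [hq]
    -- lower bound
    have h4 : (c + L) * q ≤ e ⬝ᵥ r := by
      rw [← hAe, h3]
      nlinarith [h1]
    -- Cauchy Schwarz
    have h5 : e ⬝ᵥ r ≤ Real.sqrt p * Real.sqrt R := by
      have := cs_dot e r
      rw [← hp, ← hR] at this
      exact this
    -- sqrt p ≤ sqrt q / sqrt L1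
    have h6 : Real.sqrt p ≤ Real.sqrt q / Real.sqrt L1 := by
      rw [← Real.sqrt_div' _ hL1pos.le] at *
      · apply Real.sqrt_le_sqrt
        rw [le_div_iff₀ hL1pos]
        nlinarith [h2]
    have hsq : 0 < Real.sqrt q := Real.sqrt_pos.mpr hqpos
    have hsL1 : 0 < Real.sqrt L1 := Real.sqrt_pos.mpr hL1pos
    have hsR : 0 ≤ Real.sqrt R := Real.sqrt_nonneg _
    have hq2 : Real.sqrt q * Real.sqrt q = q := Real.mul_self_sqrt hqpos.le
    have hden : 0 < Real.sqrt L1 * (c + L) := mul_pos hsL1 (by linarith)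
    -- combine
    have h7 : (c + L) * q ≤ (Real.sqrt q / Real.sqrt L1) * Real.sqrt R := by
      calc (c + L) * q ≤ e ⬝ᵥ r := h4
        _ ≤ Real.sqrt p * Real.sqrt R := h5
        _ ≤ (Real.sqrt q / Real.sqrt L1) * Real.sqrt R := mul_le_mul_of_nonneg_right h6 hsR
    have hgoal : Real.sqrt q ≤ Real.sqrt R / (Real.sqrt L1 * (c + L)) := by
      rw [le_div_iff₀ hden]
      have h8 : ((c + L) * q) * Real.sqrt L1 ≤ Real.sqrt q * Real.sqrt R := by
        have h := mul_le_mul_of_nonneg_right h7 hsL1.le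
        have heq : ((Real.sqrt q / Real.sqrt L1) * Real.sqrt R) * Real.sqrt L1
            = Real.sqrt q * Real.sqrt R := by field_simp
        linarith [h, heq.le, heq.ge]
      nlinarith [h8, hq2, hsq, hsL1, hsR, hden]
    show normWeighted M e ≤ normEuclid r / (Real.sqrt L1 * (c + L))
    unfold normWeighted normEuclid
    rw [← hq, ← hR]
    exact hgoal
end

section
/- Let M be a symmetric positive definite real N×N matrix, and for σ ∈ {+, -} let w_σ, w̃_σ : [0,∞) → ℝ^N and Δ_σ : [0,∞) → ℝ satisfy ‖w_σ(y) - w̃_σ(y)‖_M ≤ Δ_σ(y) for all y ≥ 0, with D := max( sup_{y≥0} Δ_+(y), sup_{y≥0} Δ_-(y) ) finite. Let (y_{j,σ}, τ_{j,σ})_{j=1}^{M_σ} be quadrature rules with y_{j,σ} ≥ 0, τ_{j,σ} ≥ 0, and Σ_j τ_{j,σ} ≤ 1 for each σ. For s ∈ (0,1) put s₋ := 1-s, s₊ := s, β₀(t) := sin(πt)/(πt), and define u(s) := Σ_{σ∈{+,-}} β₀(s_σ) Σ_{j=1}^{M_σ} τ_{j,σ} w_σ(y_{j,σ}/s_σ)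 and u_N(s) := Σ_{σ∈{+,-}} β₀(s_σ) Σ_{j=1}^{M_σ} τ_{j,σ} w̃_σ(y_{j,σ}/s_σ). Then for every s ∈ (0,1): ‖u(s) - u_N(s)‖_M ≤ (4/π) · D. -/
open Matrix Real Set

/-- `β₀(t) = sin(πt)/(πt)`. -/
noncomputable def beta0 (t : ℝ) : ℝ := Real.sin (Real.pi * t) / (Real.pi * t)

lemma sin_pi_mul_le (t : ℝ) (h0 : 0 ≤ t) (h1 : t ≤ 1) :
    Real.sin (Real.pi * t) ≤ 4 * t * (1 - t) := by
  have hpi1 : (3.14159 : ℝ) ≤ π := by linarith [Real.pi_gt_d6]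
  have hpi2 : π ≤ 3.1416 := by linarith [Real.pi_lt_d6]
  rcases le_or_gt t (1 - π/4) with hc | hc
  · have h2 : Real.sin (π * t) ≤ π * t := Real.sin_le (by positivity)
    nlinarith
  rcases le_or_gt (π/4) t with hc' | hc'
  · have heq : Real.sin (π * t) = Real.sin (π * (1 - t)) := by
      rw [show π * (1-t) = π - π * t by ring, Real.sin_pi_sub]
    rw [heq]
    have h2 : Real.sin (π * (1 - t)) ≤ π * (1 - t) := Real.sin_le (by nlinarith)
    nlinarith
  · set u : ℝ := π * (t - 1/2) with hu
    have habs : |u| ≤ 1 := by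
      rw [abs_le]; constructor <;> nlinarith
    have hb := Real.cos_bound habs
    have h5 : |u|^4 = (u^2)^2 := by
      rw [← abs_pow]; rw [abs_of_nonneg (by positivity)]; ring
    have hcos : Real.cos u ≤ 1 - u^2/2 + (u^2)^2 * (5/96) := by
      have := (abs_sub_le_iff.1 hb).1; rw [h5] at this; linarith
    have hsin : Real.sin (π * t) = Real.cos u := by
      rw [hu, show π * (t - 1/2) = π*t - π/2 by ring, Real.cos_sub_pi_div_two]
    have h4 : 4 * t * (1 - t) = 1 - 4 * u^2 / π^2 := by
      rw [hu]; field_simp; ring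
    rw [hsin, h4]
    have hu2 : u^2 ≤ 1 := by nlinarith [abs_nonneg u, sq_abs u]
    have hpos : (0:ℝ) < π^2 := by positivity
    have key : 4 * u^2 / π^2 + (u^2)^2 * (5/96) ≤ u^2/2 := by
      rw [div_add' _ _ _ (ne_of_gt hpos), div_le_div_iff₀ hpos (by norm_num : (0:ℝ) < 2)]
      have h6 : (u^2)^2 ≤ u^2 := by nlinarith [sq_nonneg u]
      have h7 : (u^2)^2 * π^2 ≤ u^2 * π^2 := mul_le_mul_of_nonneg_right h6 (le_of_lt hpos)
      have h8 : 9.8695 * u^2 ≤ π^2 * u^2 :=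
        mul_le_mul_of_nonneg_right (by nlinarith) (sq_nonneg u)
      nlinarith
    linarith

lemma beta0_nonneg {t : ℝ} (h0 : 0 < t) (h1 : t ≤ 1) : 0 ≤ beta0 t := by
  unfold beta0
  have hs : 0 ≤ Real.sin (π * t) :=
    Real.sin_nonneg_of_nonneg_of_le_pi (by positivity)
      (by nlinarith [Real.pi_pos])
  positivity

lemma beta0_sum_le {s : ℝ} (hs : s ∈ Set.Ioo (0:ℝ) 1) :
    beta0 (1 - s) + beta0 s ≤ 4 / π := by
  obtain ⟨h0, h1⟩ := hs
  have hpi := Real.pi_pos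
  unfold beta0
  rw [show π * (1-s) = π - π * s by ring, Real.sin_pi_sub]
  have key := sin_pi_mul_le s h0.le h1.le
  have hne1 : π - π * s ≠ 0 := by nlinarith
  have hne2 : π * s ≠ 0 := by positivity
  have hpos1 : 0 < π - π * s := by nlinarith
  have hpos2 : 0 < π * s := by positivity
  rw [div_add_div _ _ hne1 hne2, div_le_div_iff₀ (mul_pos hpos1 hpos2) hpi]
  nlinarith [mul_le_mul_of_nonneg_right key (sq_nonneg π), sq_nonneg π, mul_pos hpos1 hpos2]


lemma rbm_aux {E : Type*} [NormedAddCommGroup E] [NormedSpace ℝ E]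
    (wm wp wtm wtp : ℝ → E) (Δm Δp : ℝ → ℝ)
    (hm : ∀ y : ℝ, 0 ≤ y → ‖wm y - wtm y‖ ≤ Δm y)
    (hp : ∀ y : ℝ, 0 ≤ y → ‖wp y - wtp y‖ ≤ Δp y)
    (hbddm : BddAbove (Δm '' Set.Ici 0)) (hbddp : BddAbove (Δp '' Set.Ici 0))
    (D : ℝ) (hD : D = max (sSup (Δp '' Set.Ici 0)) (sSup (Δm '' Set.Ici 0)))
    (Mm Mp : ℕ) (ym : Fin Mm → ℝ) (τm : Fin Mm → ℝ) (yp : Fin Mp → ℝ) (τp : Fin Mp → ℝ)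
    (hym : ∀ j, 0 ≤ ym j) (hyp : ∀ j, 0 ≤ yp j)
    (hτm : ∀ j, 0 ≤ τm j) (hτp : ∀ j, 0 ≤ τp j)
    (hτmsum : ∑ j, τm j ≤ 1) (hτpsum : ∑ j, τp j ≤ 1)
    (s : ℝ) (hs0 : 0 < s) (hs1 : s < 1) :
    ‖(beta0 (1 - s) • ∑ j, τm j • wm (ym j / (1 - s)) +
          beta0 s • ∑ j, τp j • wp (yp j / s)) -
        (beta0 (1 - s) • ∑ j, τm j • wtm (ym j / (1 - s)) +
          beta0 s • ∑ j, τp j • wtp (yp j / s))‖ ≤ (4 / Real.pi) * D := by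
  have hDm : ∀ y : ℝ, 0 ≤ y → Δm y ≤ D := fun y hy => by
    rw [hD]; exact le_max_of_le_right (le_csSup hbddm ⟨y, hy, rfl⟩)
  have hDp : ∀ y : ℝ, 0 ≤ y → Δp y ≤ D := fun y hy => by
    rw [hD]; exact le_max_of_le_left (le_csSup hbddp ⟨y, hy, rfl⟩)
  have hD0 : 0 ≤ D := le_trans (le_trans (norm_nonneg _) (hm 0 le_rfl)) (hDm 0 le_rfl)
  have hb1 : 0 ≤ beta0 (1 - s) := beta0_nonneg (by linarith) (by linarith)
  have hb2 : 0 ≤ beta0 s := beta0_nonneg hs0 hs1.le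
  have hbsum : beta0 (1 - s) + beta0 s ≤ 4 / π := beta0_sum_le ⟨hs0, hs1⟩
  have hvec :
      (beta0 (1 - s) • ∑ j, τm j • wm (ym j / (1 - s)) +
          beta0 s • ∑ j, τp j • wp (yp j / s)) -
        (beta0 (1 - s) • ∑ j, τm j • wtm (ym j / (1 - s)) +
          beta0 s • ∑ j, τp j • wtp (yp j / s)) =
      beta0 (1 - s) • ∑ j, τm j • (wm (ym j / (1 - s)) - wtm (ym j / (1 - s))) +
        beta0 s • ∑ j, τp j • (wp (yp j / s) - wtp (yp j / s)) := by
    simp only [smul_sub, Finset.smul_sum, Finset.sum_sub_distrib]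
    abel
  rw [hvec]
  have hsum_m : ‖∑ j, τm j • (wm (ym j / (1 - s)) - wtm (ym j / (1 - s)))‖ ≤ D := by
    calc ‖∑ j, τm j • (wm (ym j / (1 - s)) - wtm (ym j / (1 - s)))‖
        ≤ ∑ j, ‖τm j • (wm (ym j / (1 - s)) - wtm (ym j / (1 - s)))‖ :=
          norm_sum_le _ _
      _ ≤ ∑ j, τm j * D := by
          apply Finset.sum_le_sum
          intro j _
          rw [norm_smul, Real.norm_eq_abs, abs_of_nonneg (hτm j)]
          apply mul_le_mul_of_nonneg_left _ (hτm j)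
          have hy : 0 ≤ ym j / (1 - s) := div_nonneg (hym j) (by linarith)
          exact le_trans (hm _ hy) (hDm _ hy)
      _ = (∑ j, τm j) * D := by rw [Finset.sum_mul]
      _ ≤ 1 * D := mul_le_mul_of_nonneg_right hτmsum hD0
      _ = D := one_mul D
  have hsum_p : ‖∑ j, τp j • (wp (yp j / s) - wtp (yp j / s))‖ ≤ D := by
    calc ‖∑ j, τp j • (wp (yp j / s) - wtp (yp j / s))‖
        ≤ ∑ j, ‖τp j • (wp (yp j / s) - wtp (yp j / s))‖ := norm_sum_le _ _
      _ ≤ ∑ j, τp j * D := by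
          apply Finset.sum_le_sum
          intro j _
          rw [norm_smul, Real.norm_eq_abs, abs_of_nonneg (hτp j)]
          apply mul_le_mul_of_nonneg_left _ (hτp j)
          have hy : 0 ≤ yp j / s := div_nonneg (hyp j) hs0.le
          exact le_trans (hp _ hy) (hDp _ hy)
      _ = (∑ j, τp j) * D := by rw [Finset.sum_mul]
      _ ≤ 1 * D := mul_le_mul_of_nonneg_right hτpsum hD0
      _ = D := one_mul D
  calc ‖beta0 (1 - s) • ∑ j, τm j • (wm (ym j / (1 - s)) - wtm (ym j / (1 - s))) +
          beta0 s • ∑ j, τp j • (wp (yp j / s) - wtp (yp j / s))‖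
      ≤ ‖beta0 (1 - s) • ∑ j, τm j • (wm (ym j / (1 - s)) - wtm (ym j / (1 - s)))‖ +
          ‖beta0 s • ∑ j, τp j • (wp (yp j / s) - wtp (yp j / s))‖ := norm_add_le _ _
    _ = beta0 (1 - s) * ‖∑ j, τm j • (wm (ym j / (1 - s)) - wtm (ym j / (1 - s)))‖ +
          beta0 s * ‖∑ j, τp j • (wp (yp j / s) - wtp (yp j / s))‖ := by
        rw [norm_smul, norm_smul, Real.norm_eq_abs, Real.norm_eq_abs,
          abs_of_nonneg hb1, abs_of_nonneg hb2]
    _ ≤ beta0 (1 - s) * D + beta0 s * D := by gcongr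
    _ = (beta0 (1 - s) + beta0 s) * D := by ring
    _ ≤ (4 / π) * D := mul_le_mul_of_nonneg_right hbsum hD0

/-- Theorem 4.2 (error certificate for the reduced-basis solution): if
`‖w_σ(y) - w̃_σ(y)‖_M ≤ Δ_σ(y)` for all `y ≥ 0` and
`D = max(sup_{y ≥ 0} Δ₊(y), sup_{y ≥ 0} Δ₋(y))` is finite, then with
`u(s) = Σ_σ β₀(s_σ) Σ_j τ_{j,σ} w_σ(y_{j,σ}/s_σ)` and
`u_N(s) = Σ_σ β₀(s_σ) Σ_j τ_{j,σ} w̃_σ(y_{j,σ}/s_σ)` one has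
`‖u(s) - u_N(s)‖_M ≤ (4/π) D` for every `s ∈ (0,1)`. -/
theorem rbm_certificate {N : ℕ} (M : Matrix (Fin N) (Fin N) ℝ) (hM : M.PosDef)
    (wm wp wtm wtp : ℝ → (Fin N → ℝ)) (Δm Δp : ℝ → ℝ)
    (hm : ∀ y : ℝ, 0 ≤ y → normWeighted M (wm y - wtm y) ≤ Δm y)
    (hp : ∀ y : ℝ, 0 ≤ y → normWeighted M (wp y - wtp y) ≤ Δp y)
    (hbddm : BddAbove (Δm '' Set.Ici 0)) (hbddp : BddAbove (Δp '' Set.Ici 0))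
    (D : ℝ) (hD : D = max (sSup (Δp '' Set.Ici 0)) (sSup (Δm '' Set.Ici 0)))
    (Mm Mp : ℕ) (ym : Fin Mm → ℝ) (τm : Fin Mm → ℝ) (yp : Fin Mp → ℝ) (τp : Fin Mp → ℝ)
    (hym : ∀ j, 0 ≤ ym j) (hyp : ∀ j, 0 ≤ yp j)
    (hτm : ∀ j, 0 ≤ τm j) (hτp : ∀ j, 0 ≤ τp j)
    (hτmsum : ∑ j, τm j ≤ 1) (hτpsum : ∑ j, τp j ≤ 1)
    (s : ℝ) (hs : s ∈ Set.Ioo (0:ℝ) 1) :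
    normWeighted M
        ((beta0 (1 - s) • ∑ j, τm j • wm (ym j / (1 - s)) +
            beta0 s • ∑ j, τp j • wp (yp j / s)) -
          (beta0 (1 - s) • ∑ j, τm j • wtm (ym j / (1 - s)) +
            beta0 s • ∑ j, τp j • wtp (yp j / s))) ≤
      (4 / Real.pi) * D := by
  obtain ⟨hs0, hs1⟩ := hs
  letI instN : NormedAddCommGroup (Fin N → ℝ) := Matrix.toNormedAddCommGroup M hM
  letI instI := Matrix.toInnerProductSpace M hM.posSemidef
  have hnorm : ∀ z : Fin N → ℝ, normWeighted M z = @norm _ instN.toNorm z := by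
    intro z
    show Real.sqrt (z ⬝ᵥ M.mulVec z) = Real.sqrt (RCLike.re ((M *ᵥ z) ⬝ᵥ star z))
    rw [star_trivial, dotProduct_comm]; rfl
  rw [hnorm]
  exact @rbm_aux (Fin N → ℝ) instN instI.toNormedSpace wm wp wtm wtp Δm Δp
    (fun y hy => (hnorm _) ▸ hm y hy) (fun y hy => (hnorm _) ▸ hp y hy)
    hbddm hbddp D hD Mm Mp ym τm yp τp hym hyp hτm hτp hτmsum hτpsum s hs0 hs1
end
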